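/- Let G be a locally finite infinite graph with at most countably many ends, such that δ(G) ≥ k, and such that every end ω of G has a defining sequence C₀ ⊋ C₁ ⊋ … of regions with δ⁺_G(C_n) ≥ k and G - C_n connected for all n. Then G has a finite nonempty subgraph of minimum degree at least k. -/

import Mathlib

open SimpleGraph Set

universe u
variable {V : Type u}

/-- A graph is locally finite if every vertex has finite neighbourhood. -/
def LocFin (G : SimpleGraph V) : Prop := ∀ v, (G.neighborSet v).Finite

/-- The vertex boundary `V⁺(U)`: vertices of `U` with a neighbour outside `U`. -/
def vBdry (G : SimpleGraph V) (U : Set V) : Set V :=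
  {v | v ∈ U ∧ ∃ w, w ∉ U ∧ G.Adj v w}

/-- The neighbourhood `N(U)` of a vertex set `U`: vertices outside `U` adjacent to `U`. -/
def nbhd (G : SimpleGraph V) (U : Set V) : Set V :=
  {w | w ∉ U ∧ ∃ v ∈ U, G.Adj v w}

/-- Degree of `v` in the subgraph of `G` induced on the vertex set `A`. -/
noncomputable def degIn (G : SimpleGraph V) (A : Set V) (v : V) : ℕ :=
  (A ∩ G.neighborSet v).ncard

/-- `C` is (the vertex set of) a component of `G - S`. -/
def IsCompOf (G : SimpleGraph V) (S C : Set V) : Prop :=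
  C.Nonempty ∧ C ∩ S = ∅ ∧ (G.induce C).Connected ∧
    ∀ v ∈ C, ∀ w, w ∉ S → G.Adj v w → w ∈ C

/-- A region of `G`: a (nonempty) connected induced subgraph with finite vertex boundary. -/
def IsRegion (G : SimpleGraph V) (C : Set V) : Prop :=
  (G.induce C).Connected ∧ (vBdry G C).Finite

/-- `δ⁺_G(C) ≥ k`: every boundary vertex of `C` has degree at least `k`
in the graph `G[S, C]` induced on `N(C) ∪ V⁺(C)`. -/
def minOutDegGE (G : SimpleGraph V) (C : Set V) (k : ℕ) : Prop :=
  ∀ v ∈ vBdry G C, k ≤ degIn G (nbhd G C ∪ vBdry G C) v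

/-- `f : ℕ → V` is a ray (one-way infinite path) in `G`. -/
def IsRay (G : SimpleGraph V) (f : ℕ → V) : Prop :=
  Function.Injective f ∧ ∀ n, G.Adj (f n) (f (n + 1))

/-- The ray `f` has a tail inside the vertex set `C`. -/
def HasTailIn (f : ℕ → V) (C : Set V) : Prop := ∃ N, ∀ n, N ≤ n → f n ∈ C

/-- Two rays are equivalent (belong to the same end) iff no finite vertex set
separates them: for every finite `S` they have tails in a common component of `G - S`. -/
def RayEquiv (G : SimpleGraph V) (f g : ℕ → V) : Prop :=
  ∀ S : Set V, S.Finite → ∃ C, IsCompOf G S C ∧ HasTailIn f C ∧ HasTailIn g C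

/-! ### Part 1: deleted graphs and components -/

/-- The graph `G - S`. -/
def Del (G : SimpleGraph V) (S : Set V) : SimpleGraph V where
  Adj a b := G.Adj a b ∧ a ∉ S ∧ b ∉ S
  symm := ⟨fun a b h => ⟨h.1.symm, h.2.2, h.2.1⟩⟩
  loopless := ⟨fun a h => G.loopless.1 a h.1⟩

lemma Del_le (G : SimpleGraph V) (S : Set V) : Del G S ≤ G := fun _ _ h => h.1

lemma Del_mono (G : SimpleGraph V) {S T : Set V} (h : S ⊆ T) : Del G T ≤ Del G S :=
  fun _ _ hab => ⟨hab.1, fun hx => hab.2.1 (h hx), fun hx => hab.2.2 (h hx)⟩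

lemma Del_locFin {G : SimpleGraph V} (hG : LocFin G) (S : Set V) : LocFin (Del G S) :=
  fun v => (hG v).subset (fun _ h => h.1)

/-- The component of `v` in `G - S`. -/
def comp (G : SimpleGraph V) (S : Set V) (v : V) : Set V := {u | (Del G S).Reachable v u}

lemma mem_comp_self (G : SimpleGraph V) (S : Set V) (v : V) : v ∈ comp G S v :=
  Reachable.refl v

lemma comp_eq_of_mem {G : SimpleGraph V} {S : Set V} {v u : V} (h : u ∈ comp G S v) :
    comp G S u = comp G S v := by
  ext w; exact ⟨fun hw => h.trans hw, fun hw => h.symm.trans hw⟩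

lemma comp_mono {G : SimpleGraph V} {S T : Set V} (h : S ⊆ T) (v : V) :
    comp G T v ⊆ comp G S v := fun _ hu => hu.mono (Del_mono G h)

lemma not_mem_S_of_reachable {G : SimpleGraph V} {S : Set V} {v u : V}
    (hv : v ∉ S) (h : (Del G S).Reachable v u) : u ∉ S := by
  obtain ⟨p⟩ := h
  induction p with
  | nil => exact hv
  | cons h p ih => exact ih h.2.2

lemma comp_inter_S {G : SimpleGraph V} {S : Set V} {v : V} (hv : v ∉ S) :
    comp G S v ∩ S = ∅ := by
  ext u; simp only [Set.mem_inter_iff, Set.mem_empty_iff_false, iff_false, not_and]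
  exact fun hu => not_mem_S_of_reachable hv hu

lemma comp_closed {G : SimpleGraph V} {S : Set V} {v : V} (hv : v ∉ S) :
    ∀ u ∈ comp G S v, ∀ w, w ∉ S → G.Adj u w → w ∈ comp G S v := by
  intro u hu w hw hadj
  exact hu.trans (Adj.reachable ⟨hadj, not_mem_S_of_reachable hv hu, hw⟩)

/-- walks in `Del G S` starting in a set closed appropriately end in it etc.
Transfer a `Del`-walk to an induced-graph reachability statement. -/
lemma induce_reachable_of_del_walk {G : SimpleGraph V} {S : Set V} {v : V} (hv : v ∉ S)
    {a b : V} (p : (Del G S).Walk a b) (ha : a ∈ comp G S v) :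
    ∀ (hb : b ∈ comp G S v),
      (G.induce (comp G S v)).Reachable ⟨a, ha⟩ ⟨b, hb⟩ := by
  induction p with
  | nil => intro hb; rfl
  | @cons x y z h p ih =>
      intro hb
      have hy : y ∈ comp G S v := ha.trans (Adj.reachable h)
      have hxy : (G.induce (comp G S v)).Adj ⟨x, ha⟩ ⟨y, hy⟩ := by
        simp only [comap_adj, Function.Embedding.coe_subtype]
        exact h.1
      exact (hxy.reachable).trans (ih hy hb)

lemma isCompOf_comp {G : SimpleGraph V} {S : Set V} {v : V} (hv : v ∉ S) :
    IsCompOf G S (comp G S v) := by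
  refine ⟨⟨v, mem_comp_self G S v⟩, comp_inter_S hv, ?_, comp_closed hv⟩
  rw [connected_iff]
  refine ⟨?_, ⟨⟨v, mem_comp_self G S v⟩⟩⟩
  rintro ⟨a, ha⟩ ⟨b, hb⟩
  have h1 := (induce_reachable_of_del_walk hv (ha.some) (mem_comp_self G S v) ha).symm
  have h2 := induce_reachable_of_del_walk hv (hb.some) (mem_comp_self G S v) hb
  exact h1.trans h2

/-- An induced-connected set with closure property equals the component of any of its points. -/
lemma isCompOf_eq_comp {G : SimpleGraph V} {S C : Set V} (hC : IsCompOf G S C)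
    {x : V} (hx : x ∈ C) : C = comp G S x := by
  obtain ⟨hne, hdisj, hconn, hclosed⟩ := hC
  have hCS : ∀ y ∈ C, y ∉ S := by
    intro y hy hyS
    exact absurd (Set.mem_inter hy hyS) (by rw [hdisj]; exact fun h => h)
  apply Set.Subset.antisymm
  · intro y hy
    obtain ⟨p⟩ := hconn.preconnected ⟨x, hx⟩ ⟨y, hy⟩
    -- turn an induced walk into a Del walk
    have : ∀ {a b : C} (q : (G.induce C).Walk a b), (Del G S).Reachable a.1 b.1 := by
      intro a b q
      induction q with
      | nil => rfl
      | @cons c d e h q ih =>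
          have hadj : (Del G S).Adj c.1 d.1 := by
            refine ⟨h, hCS _ c.2, hCS _ d.2⟩
          exact (Adj.reachable hadj).trans ih
    exact this p
  · intro y hy
    obtain ⟨p⟩ := hy
    have key : ∀ {a b : V} (q : (Del G S).Walk a b), a ∈ C → b ∈ C := by
      intro a b q
      induction q with
      | nil => exact id
      | @cons c d e h q ih => exact fun hc => ih (hclosed c hc d h.2.2 h.1)
    exact key p hx

/-! ### Part 2: more component lemmas -/

lemma comp_disjoint_or_eq {G : SimpleGraph V} {S : Set V} {x y : V} :
    comp G S x = comp G S y ∨ comp G S x ∩ comp G S y = ∅ := by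
  by_cases h : (comp G S x ∩ comp G S y).Nonempty
  · obtain ⟨z, hzx, hzy⟩ := h
    left; rw [← comp_eq_of_mem hzx, ← comp_eq_of_mem hzy]
  · right; exact Set.not_nonempty_iff_eq_empty.mp h

lemma isCompOf_eq_of_inter {G : SimpleGraph V} {S C C' : Set V} (hC : IsCompOf G S C)
    (hC' : IsCompOf G S C') (h : (C ∩ C').Nonempty) : C = C' := by
  obtain ⟨x, hx, hx'⟩ := h
  rw [isCompOf_eq_comp hC hx, isCompOf_eq_comp hC' hx']

/-- tails in two components force the components to be equal -/
lemma eq_of_hasTailIn {G : SimpleGraph V} {S C C' : Set V} (hC : IsCompOf G S C)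
    (hC' : IsCompOf G S C') {f : ℕ → V} (h : HasTailIn f C) (h' : HasTailIn f C') : C = C' := by
  obtain ⟨N, hN⟩ := h; obtain ⟨N', hN'⟩ := h'
  exact isCompOf_eq_of_inter hC hC'
    ⟨f (max N N'), hN _ (le_max_left _ _), hN' _ (le_max_right _ _)⟩

/-- Crossing lemma: a set with the closure property w.r.t. `S ⊇ vBdry G R`
that meets `R` is contained in `R`. Stated for components `comp`. -/
lemma comp_subset_of_inter_region {G : SimpleGraph V} {S R : Set V} (hSR : vBdry G R ⊆ S)
    {v : V} (hv : v ∉ S) (h : (comp G S v ∩ R).Nonempty) : comp G S v ⊆ R := by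
  obtain ⟨x, hx, hxR⟩ := h
  have hxv : comp G S x = comp G S v := comp_eq_of_mem hx
  rw [← hxv]
  intro y hy
  obtain ⟨p⟩ := hy
  have key : ∀ {a b : V} (q : (Del G S).Walk a b), a ∈ R → b ∈ R := by
    intro a b q
    induction q with
    | nil => exact id
    | @cons c d e h q ih =>
        intro hc
        by_cases hd : d ∈ R
        · exact ih hd
        · exact absurd (hSR ⟨hc, d, hd, h.1⟩) h.2.1
  exact key p hxR

/-- Same crossing lemma for an abstract `IsCompOf` set. -/
lemma isCompOf_subset_of_inter_region {G : SimpleGraph V} {S R E : Set V}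
    (hE : IsCompOf G S E) (hSR : vBdry G R ⊆ S) (h : (E ∩ R).Nonempty) : E ⊆ R := by
  obtain ⟨x, hx, hxR⟩ := h
  have hxS : x ∉ S := by
    intro hxS
    have := hE.2.1
    exact absurd (Set.mem_inter hx hxS) (by rw [this]; exact id)
  rw [isCompOf_eq_comp hE hx]
  exact comp_subset_of_inter_region hSR hxS ⟨x, mem_comp_self G S x, hxR⟩

/-- An induced-connected set avoiding the border zone of `R` is inside or outside `R`. -/
lemma connected_subset_or_disjoint {G : SimpleGraph V} {C R : Set V}
    (hconn : (G.induce C).Connected) (hdisj : C ∩ (vBdry G R ∪ nbhd G R) = ∅) :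
    C ⊆ R ∨ C ∩ R = ∅ := by
  by_cases h : (C ∩ R).Nonempty
  · left
    obtain ⟨x, hx, hxR⟩ := h
    intro y hy
    obtain ⟨p⟩ := hconn.preconnected ⟨x, hx⟩ ⟨y, hy⟩
    have key : ∀ {a b : C} (q : (G.induce C).Walk a b), a.1 ∈ R → b.1 ∈ R := by
      intro a b q
      induction q with
      | nil => exact id
      | @cons c d e h q ih =>
          intro hc
          by_cases hd : d.1 ∈ R
          · exact ih hd
          · have : c.1 ∈ vBdry G R := ⟨hc, d.1, hd, h⟩
            have : c.1 ∈ C ∩ (vBdry G R ∪ nbhd G R) := ⟨c.2, Or.inl this⟩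
            rw [hdisj] at this
            exact this.elim
    exact key p hxR
  · right; exact Set.not_nonempty_iff_eq_empty.mp h

/-- A connected induced set meeting an adjacency-closed set is contained in it. -/
lemma connected_subset_closed {G : SimpleGraph V} {C K : Set V}
    (hconn : (G.induce C).Connected) (hK : ∀ v ∈ K, ∀ w, G.Adj v w → w ∈ K)
    (h : (C ∩ K).Nonempty) : C ⊆ K := by
  obtain ⟨x, hx, hxK⟩ := h
  intro y hy
  obtain ⟨p⟩ := hconn.preconnected ⟨x, hx⟩ ⟨y, hy⟩
  have key : ∀ {a b : C} (q : (G.induce C).Walk a b), a.1 ∈ K → b.1 ∈ K := by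
    intro a b q
    induction q with
    | nil => exact id
    | @cons c d e h q ih => exact fun hc => ih (hK c.1 hc d.1 h)
  exact key p hxK

/-! ### Part 3: finiteness toolkit -/

/-- Vertices reachable by a walk of length at most `n` (a "ball"). -/
def ball (G : SimpleGraph V) (v : V) (n : ℕ) : Set V :=
  {u | ∃ p : G.Walk v u, p.length ≤ n}

lemma mem_ball_self (G : SimpleGraph V) (v : V) (n : ℕ) : v ∈ _root_.ball G v n :=
  ⟨Walk.nil, by simp⟩

lemma ball_mono (G : SimpleGraph V) (v : V) {m n : ℕ} (h : m ≤ n) :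
    _root_.ball G v m ⊆ _root_.ball G v n := fun _ ⟨p, hp⟩ => ⟨p, hp.trans h⟩

lemma ball_finite {G : SimpleGraph V} (hG : LocFin G) (n : ℕ) (v : V) :
    (_root_.ball G v n).Finite := by
  induction n generalizing v with
  | zero =>
      apply Set.Finite.subset (Set.finite_singleton v)
      rintro u ⟨p, hp⟩
      have : p.length = 0 := Nat.le_zero.mp hp
      cases p with
      | nil => rfl
      | cons h q => simp [Walk.length_cons] at this
  | succ n ih =>
      apply Set.Finite.subset ((Set.finite_singleton v).union
        ((hG v).biUnion (fun w _ => ih w)))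
      rintro u ⟨p, hp⟩
      cases p with
      | nil => exact Or.inl rfl
      | @cons _ w _ h q =>
          right
          refine Set.mem_biUnion h ⟨q, ?_⟩
          simpa [Walk.length_cons] using hp

lemma reachable_mem_ball {G : SimpleGraph V} {v u : V} (h : G.Reachable v u) :
    ∃ n, u ∈ _root_.ball G v n := by
  obtain ⟨p⟩ := h
  exact ⟨p.length, p, le_refl _⟩

/-- The set of neighbours of a finite set is finite. -/
lemma nbrs_finite {G : SimpleGraph V} (hG : LocFin G) {S : Set V} (hS : S.Finite) :
    {w | ∃ v ∈ S, G.Adj v w}.Finite := by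
  apply Set.Finite.subset (hS.biUnion (fun v _ => hG v))
  rintro w ⟨v, hv, hadj⟩
  exact Set.mem_biUnion hv hadj

/-- `nbhd G R` is finite whenever `vBdry G R` is. -/
lemma nbhd_finite {G : SimpleGraph V} (hG : LocFin G) {R : Set V} (hR : (vBdry G R).Finite) :
    (nbhd G R).Finite := by
  apply Set.Finite.subset (nbrs_finite hG hR)
  rintro w ⟨hw, v, hv, hadj⟩
  exact ⟨v, ⟨hv, w, hw, hadj⟩, hadj⟩

/-- Every vertex of a walk is reachable from the start. -/
lemma reachable_getVert {G : SimpleGraph V} {a b : V} (p : G.Walk a b) (i : ℕ) :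
    G.Reachable a (p.getVert i) := by
  induction p generalizing i with
  | nil => exact Reachable.refl _
  | @cons x y z h q ih =>
      cases i with
      | zero => exact Reachable.refl _
      | succ i => exact (Adj.reachable h).trans (ih i)

/-! ### Part 4: König's lemma for rays -/

lemma walk_avoid {G : SimpleGraph V} {S : Set V} {x : V} {a b : V}
    (q : (Del G S).Walk a b) (hx : x ∉ q.support) :
    (Del G (insert x S)).Reachable a b := by
  induction q with
  | nil => exact Reachable.refl _
  | @cons c d e h q ih =>
      have hc : c ≠ x := fun hcx => hx (by rw [← hcx]; exact Walk.start_mem_support _)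
      have hd : d ≠ x := fun hdx => hx (by
        rw [Walk.support_cons]; exact List.mem_cons_of_mem _ (by rw [← hdx]; exact Walk.start_mem_support _))
      have hadj : (Del G (insert x S)).Adj c d := by
        refine ⟨h.1, ?_, ?_⟩
        · simp only [Set.mem_insert_iff]; push_neg; exact ⟨hc, h.2.1⟩
        · simp only [Set.mem_insert_iff]; push_neg; exact ⟨hd, h.2.2⟩
      refine (Adj.reachable hadj).trans (ih ?_)
      intro hmem; exact hx (by rw [Walk.support_cons]; exact List.mem_cons_of_mem _ hmem)

lemma last_exit {G : SimpleGraph V} {S : Set V} :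
    ∀ (n : ℕ) {x u : V} (p : (Del G S).Walk x u), p.length ≤ n → u ≠ x →
      ∃ y, (Del G S).Adj x y ∧ y ≠ x ∧ (Del G (insert x S)).Reachable y u := by
  classical
  intro n
  induction n with
  | zero =>
      intro x u p hp hne
      cases p with
      | nil => exact absurd rfl hne
      | cons h q => simp [Walk.length_cons] at hp
  | succ n ih =>
      intro x u p hp hne
      cases p with
      | nil => exact absurd rfl hne
      | @cons _ b _ h q =>
          by_cases hxq : x ∈ q.support
          · have hlen : (q.dropUntil x hxq).length ≤ n := by
              have h1 := Walk.length_dropUntil_le q hxq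
              have h2 : q.length ≤ n := by
                simpa [Walk.length_cons, Nat.succ_le_succ_iff] using hp
              omega
            exact ih (q.dropUntil x hxq) hlen hne
          · exact ⟨b, h, fun hbx => h.1.ne hbx.symm, walk_avoid q hxq⟩

lemma konig_step {G : SimpleGraph V} (hG : LocFin G) {T : Set V} {x : V} (hx : x ∉ T)
    (hinf : {u | (Del G T).Reachable x u}.Infinite) :
    ∃ y, (Del G T).Adj x y ∧ y ∉ insert x T ∧
      {u | (Del G (insert x T)).Reachable y u}.Infinite := by
  have hsub : {u | (Del G T).Reachable x u} \ {x} ⊆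
      ⋃ y ∈ {y | (Del G T).Adj x y}, {u | (Del G (insert x T)).Reachable y u} := by
    rintro u ⟨hu, hux⟩
    simp only [Set.mem_singleton_iff] at hux
    obtain ⟨p⟩ := hu
    obtain ⟨y, hadj, hyx, hreach⟩ := last_exit p.length p (le_refl _) hux
    exact Set.mem_biUnion hadj hreach
  have hNfin : {y | (Del G T).Adj x y}.Finite := (Del_locFin hG T) x
  by_contra hcon
  push_neg at hcon
  have hall : ∀ y ∈ {y | (Del G T).Adj x y}, {u | (Del G (insert x T)).Reachable y u}.Finite := by
    intro y hy
    have hyx : y ∉ insert x T := by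
      simp only [Set.mem_insert_iff]
      push_neg
      exact ⟨fun h => hy.1.ne h.symm, hy.2.2⟩
    exact hcon y hy hyx
  have hfin : ({u | (Del G T).Reachable x u} \ {x}).Finite :=
    Set.Finite.subset (hNfin.biUnion hall) hsub
  exact (hinf.diff (Set.finite_singleton x)) hfin

/-! ### Part 4b: the ray construction -/

section KonigRay

variable {G : SimpleGraph V} (hG : LocFin G)

/-- States for the König ray construction. -/
def RState (G : SimpleGraph V) : Type _ :=
  { s : Set V × V // s.2 ∉ s.1 ∧ {u | (Del G s.1).Reachable s.2 u}.Infinite }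

noncomputable def rstep (hG : LocFin G) (s : RState G) : RState G :=
  ⟨(insert s.1.2 s.1.1, Classical.choose (konig_step hG s.2.1 s.2.2)),
    (Classical.choose_spec (konig_step hG s.2.1 s.2.2)).2.1,
    (Classical.choose_spec (konig_step hG s.2.1 s.2.2)).2.2⟩

lemma rstep_adj (s : RState G) : (Del G s.1.1).Adj s.1.2 (rstep hG s).1.2 :=
  (Classical.choose_spec (konig_step hG s.2.1 s.2.2)).1

lemma rstep_T (s : RState G) : (rstep hG s).1.1 = insert s.1.2 s.1.1 := rfl

noncomputable def rchain (hG : LocFin G) (s0 : RState G) (n : ℕ) : RState G :=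
  (rstep hG)^[n] s0

lemma rchain_succ (s0 : RState G) (n : ℕ) :
    rchain hG s0 (n + 1) = rstep hG (rchain hG s0 n) :=
  Function.iterate_succ_apply' _ _ _

lemma rchain_T_succ (s0 : RState G) (n : ℕ) :
    (rchain hG s0 (n + 1)).1.1 = insert (rchain hG s0 n).1.2 (rchain hG s0 n).1.1 := by
  rw [rchain_succ]; rfl

lemma rchain_T_mono (s0 : RState G) {m n : ℕ} (h : m ≤ n) :
    (rchain hG s0 m).1.1 ⊆ (rchain hG s0 n).1.1 := by
  induction n with
  | zero => simp_all
  | succ n ih =>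
      rcases Nat.lt_or_ge m (n + 1) with h' | h'
      · refine (ih (Nat.lt_succ_iff.mp h')).trans ?_
        rw [rchain_T_succ]
        exact Set.subset_insert _ _
      · have : m = n + 1 := le_antisymm h h'
        subst this; exact subset_rfl

lemma rchain_x_mem (s0 : RState G) (n : ℕ) :
    (rchain hG s0 n).1.2 ∈ (rchain hG s0 (n + 1)).1.1 := by
  rw [rchain_T_succ]; exact Set.mem_insert _ _

/-- König's lemma: an infinite component contains a ray starting at its root. -/
lemma konig_ray (hG : LocFin G) {S : Set V} {v : V} (hv : v ∉ S) (hinf : (comp G S v).Infinite) :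
    ∃ f : ℕ → V, IsRay G f ∧ f 0 = v ∧ ∀ n, f n ∈ comp G S v := by
  set s0 : RState G := ⟨(S, v), hv, hinf⟩ with hs0
  set f : ℕ → V := fun n => (rchain hG s0 n).1.2 with hf
  have hadj : ∀ n, (Del G (rchain hG s0 n).1.1).Adj (f n) (f (n + 1)) := by
    intro n
    rw [hf]
    simp only [rchain_succ hG s0 n]
    exact rstep_adj hG _
  have hS0 : ∀ n, S ⊆ (rchain hG s0 n).1.1 := fun n => rchain_T_mono hG s0 (Nat.zero_le n)
  have hreach : ∀ n, (Del G S).Reachable v (f n) := by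
    intro n
    induction n with
    | zero => exact Reachable.refl _
    | succ n ih =>
        refine ih.trans (Adj.reachable ?_)
        exact Del_mono G (hS0 n) (hadj n)
  refine ⟨f, ⟨?_, fun n => (hadj n).1⟩, rfl, fun n => hreach n⟩
  -- injectivity
  have hmem : ∀ m n, m < n → f m ∈ (rchain hG s0 n).1.1 :=
    fun m n h => rchain_T_mono hG s0 h (rchain_x_mem hG s0 m)
  have hnot : ∀ n, f n ∉ (rchain hG s0 n).1.1 := fun n => (rchain hG s0 n).2.1
  intro m n hmn
  rcases lt_trichotomy m n with h | h | h
  · exact absurd (hmn ▸ hmem m n h) (hnot n)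
  · exact h
  · exact absurd (hmn ▸ hmem n m h) (hnot m)

end KonigRay

/-! ### Part 5: ray tails and the equivalence -/

lemma ray_tail_avoids {f : ℕ → V} (hf : Function.Injective f) {S : Set V} (hS : S.Finite) :
    ∃ N, ∀ n, N ≤ n → f n ∉ S := by
  have hpre : (f ⁻¹' S).Finite := Set.Finite.preimage (Set.injOn_of_injective hf) hS
  obtain ⟨N, hN⟩ := hpre.bddAbove
  refine ⟨N + 1, fun n hn hmem => ?_⟩
  have := hN hmem
  omega

lemma ray_tail_comp {G : SimpleGraph V} {f : ℕ → V} (hf : IsRay G f) {S : Set V}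
    (hS : S.Finite) : ∃ N, f N ∉ S ∧ (∀ n, N ≤ n → f n ∈ comp G S (f N)) := by
  obtain ⟨N, hN⟩ := ray_tail_avoids hf.1 hS
  refine ⟨N, hN N (le_refl N), fun n hn => ?_⟩
  clear hS
  induction n with
  | zero =>
      have : N = 0 := Nat.le_zero.mp hn
      rw [this] at *
      exact mem_comp_self G S _
  | succ n ih =>
      rcases Nat.lt_or_ge n N with h | h
      · have : N = n + 1 := by omega
        rw [this] at *
        exact mem_comp_self G S _
      · exact comp_closed (hN N (le_refl N)) _ (ih h) _ (hN (n+1) (by omega)) (hf.2 n)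

lemma rayEquiv_refl {G : SimpleGraph V} {f : ℕ → V} (hf : IsRay G f) : RayEquiv G f f := by
  intro S hS
  obtain ⟨N, hNS, hN⟩ := ray_tail_comp hf hS
  exact ⟨comp G S (f N), isCompOf_comp hNS, ⟨N, hN⟩, ⟨N, hN⟩⟩

lemma rayEquiv_symm {G : SimpleGraph V} {f g : ℕ → V} (h : RayEquiv G f g) :
    RayEquiv G g f := by
  intro S hS
  obtain ⟨C, h1, h2, h3⟩ := h S hS
  exact ⟨C, h1, h3, h2⟩

lemma rayEquiv_trans {G : SimpleGraph V} {f g h : ℕ → V} (h1 : RayEquiv G f g)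
    (h2 : RayEquiv G g h) : RayEquiv G f h := by
  intro S hS
  obtain ⟨C, hC, hfC, hgC⟩ := h1 S hS
  obtain ⟨C', hC', hgC', hhC'⟩ := h2 S hS
  have : C = C' := eq_of_hasTailIn hC hC' hgC hgC'
  exact ⟨C, hC, hfC, this ▸ hhC'⟩

lemma rayEquiv_equivalence (G : SimpleGraph V) :
    Equivalence (fun p q : {f : ℕ → V // IsRay G f} => RayEquiv G p.1 q.1) :=
  ⟨fun p => rayEquiv_refl p.2, fun h => rayEquiv_symm h, fun ha hb => rayEquiv_trans ha hb⟩

/-! ### Part 6: the construction lemma -/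

lemma construction {G : SimpleGraph V} (hG : LocFin G) {k : ℕ}
    (hdeg : ∀ v, k ≤ (G.neighborSet v).ncard) (K : Set V)
    (hK : ∀ v ∈ K, ∀ w, G.Adj v w → w ∈ K) (L : List (Set V))
    (hsub : ∀ R ∈ L, R ⊆ K)
    (hbd : ∀ R ∈ L, (vBdry G R).Finite)
    (hmin : ∀ R ∈ L, minOutDegGE G R k)
    (hdisj : ∀ R ∈ L, ∀ R' ∈ L, R ≠ R' → R ∩ R' = ∅)
    (hW0fin : (K \ ⋃₀ {R | R ∈ L}).Finite)
    (hW0ne : (K \ ⋃₀ {R | R ∈ L}).Nonempty) :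
    ∃ H : G.Subgraph, H.verts.Finite ∧ H.verts.Nonempty ∧
      ∀ w ∈ H.verts, k ≤ (H.neighborSet w).ncard := by
  set U : Set V := ⋃₀ {R | R ∈ L} with hU
  set W0 : Set V := K \ U with hW0
  set W : Set V := W0 ∪ ⋃ R ∈ {R | R ∈ L}, vBdry G R with hW
  -- every G-neighbour (within K) of a vertex of W lies in W
  have hnbr : ∀ w ∈ W, ∀ u, u ∈ K → G.Adj w u → (∀ R ∈ L, w ∉ R ∨ u ∉ R) → u ∈ W := by
    intro w hwW u huK hadj hcond
    by_cases huU : u ∈ U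
    · obtain ⟨R, hRL, huR⟩ := huU
      right
      refine Set.mem_biUnion hRL ⟨huR, w, ?_, hadj.symm⟩
      rcases hcond R hRL with h | h
      · exact h
      · exact absurd huR h
    · exact Or.inl ⟨huK, huU⟩
  refine ⟨⟨W, fun a b => a ∈ W ∧ b ∈ W ∧ G.Adj a b, fun h => h.2.2, fun h => h.1,
    ⟨fun a b h => ⟨h.2.1, h.1, h.2.2.symm⟩⟩⟩, ?_, ?_, ?_⟩
  · -- finiteness
    refine Set.Finite.union hW0fin ?_
    exact Set.Finite.biUnion (List.finite_toSet L) (fun R hR => hbd R hR)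
  · exact hW0ne.mono (Set.subset_union_left)
  · intro w hwW
    have hNS : ∀ u ∈ W ∩ G.neighborSet w, (⟨W, fun a b => a ∈ W ∧ b ∈ W ∧ G.Adj a b,
        fun h => h.2.2, fun h => h.1, ⟨fun a b h => ⟨h.2.1, h.1, h.2.2.symm⟩⟩⟩ :
          G.Subgraph).Adj w u := by
      intro u hu
      exact ⟨hwW, hu.1, hu.2⟩
    have hset : (⟨W, fun a b => a ∈ W ∧ b ∈ W ∧ G.Adj a b, fun h => h.2.2, fun h => h.1,
        ⟨fun a b h => ⟨h.2.1, h.1, h.2.2.symm⟩⟩⟩ : G.Subgraph).neighborSet w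
        = W ∩ G.neighborSet w := by
      ext u
      constructor
      · rintro ⟨h1, h2, h3⟩; exact ⟨h2, h3⟩
      · rintro ⟨h1, h2⟩; exact ⟨hwW, h1, h2⟩
    rw [hset]
    rcases hwW with hw0 | hwB
    · -- interior vertex
      have hsubW : G.neighborSet w ⊆ W := by
        intro u hu
        have huK : u ∈ K := hK w hw0.1 u hu
        refine hnbr w (Or.inl hw0) u huK hu (fun R hRL => Or.inl ?_)
        intro hwR
        exact hw0.2 ⟨R, hRL, hwR⟩
      rw [Set.inter_eq_self_of_subset_right hsubW]
      exact hdeg w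
    · -- boundary vertex
      simp only [Set.mem_iUnion] at hwB
      obtain ⟨R0, hR0L, hwR0⟩ := hwB
      have hw0W : w ∈ W := Or.inr (Set.mem_biUnion hR0L hwR0)
      have hkey : (nbhd G R0 ∪ vBdry G R0) ∩ G.neighborSet w ⊆ W ∩ G.neighborSet w := by
        rintro u ⟨hu1, hu2⟩
        refine ⟨?_, hu2⟩
        rcases hu1 with hnb | hbd'
        · -- u outside R0, adjacent to w ∈ R0
          have huK : u ∈ K := hK w (hsub R0 hR0L hwR0.1) u hu2
          refine hnbr w hw0W u huK hu2 (fun R hRL => ?_)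
          by_cases hRR0 : R = R0
          · subst hRR0; exact Or.inr hnb.1
          · by_cases hwR : w ∈ R
            · have := hdisj R hRL R0 hR0L hRR0
              exact absurd (Set.mem_inter hwR hwR0.1) (by rw [this]; exact id)
            · exact Or.inl hwR
        · exact Or.inr (Set.mem_biUnion hR0L hbd')
      have hfin : (W ∩ G.neighborSet w).Finite := (hG w).subset Set.inter_subset_right
      calc k ≤ degIn G (nbhd G R0 ∪ vBdry G R0) w := hmin R0 hR0L w hwR0
        _ ≤ (W ∩ G.neighborSet w).ncard := Set.ncard_le_ncard hkey hfin

/-! ### Part 7: auxiliary lemmas -/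

lemma pigeon {α : Type u} {F : Set α} (hF : F.Finite) {E : ℕ → α} {n₀ : ℕ}
    (hE : ∀ m, n₀ ≤ m → E m ∈ F) : ∃ a ∈ F, {m | n₀ ≤ m ∧ E m = a}.Infinite := by
  by_contra hcon
  push_neg at hcon
  have hfib : ∀ a ∈ F, {m | n₀ ≤ m ∧ E m = a}.Finite :=
    fun a ha => hcon a ha
  have hsub : {m | n₀ ≤ m} ⊆ ⋃ a ∈ F, {m | n₀ ≤ m ∧ E m = a} :=
    fun m hm => Set.mem_biUnion (hE m hm) ⟨hm, rfl⟩
  exact (Set.Ici n₀).infinite_of_not_bddAbove (by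
      intro ⟨b, hb⟩
      exact absurd (hb (Set.mem_Ici.mpr (le_max_left n₀ (b+1)))) (by omega))
    (Set.Finite.subset (hF.biUnion hfib) hsub)

lemma infinite_exists_ge {s : Set ℕ} (hs : s.Infinite) (n : ℕ) : ∃ m ∈ s, n ≤ m := by
  obtain ⟨m, hm, hnm⟩ := hs.exists_gt n
  exact ⟨m, hm, le_of_lt hnm⟩

lemma comp_touches {G : SimpleGraph V} {S : Set V} {x y : V} (p : G.Walk x y)
    (hx : x ∉ S) (hy : y ∈ S) : ∃ u ∈ comp G S x, ∃ s ∈ S, G.Adj u s := by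
  induction p with
  | nil => exact absurd hy hx
  | @cons a b c h q ih =>
      by_cases hb : b ∈ S
      · exact ⟨a, mem_comp_self G S a, b, hb, h⟩
      · obtain ⟨u, hu, s, hs, hadj⟩ := ih hb hy
        have hba : b ∈ comp G S a := Adj.reachable ⟨h, hx, hb⟩
        rw [comp_eq_of_mem hba] at hu
        exact ⟨u, hu, s, hs, hadj⟩

lemma comp_eq_comp_of_mem {G : SimpleGraph V} {S : Set V} {u x : V} {D : Set V}
    (hD : D = comp G S u) (hx : x ∈ D) : D = comp G S x := by
  subst hD; exact (comp_eq_of_mem hx).symm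

/-- Choose a deep enough member of a strictly decreasing sequence avoiding a finite set. -/
lemma seq_avoid {C : ℕ → Set V} (hdec : ∀ n, C (n + 1) ⊂ C n) (hempty : (⋂ n, C n) = ∅)
    {F : Set V} (hF : F.Finite) : ∃ m, C m ∩ F = ∅ := by
  classical
  have hanti : ∀ {m n : ℕ}, m ≤ n → C n ⊆ C m := by
    intro m n h
    induction n with
    | zero => have : m = 0 := Nat.le_zero.mp h; subst this; exact subset_rfl
    | succ n ih =>
        rcases Nat.lt_or_ge m (n + 1) with h' | h'
        · exact (subset_of_ssubset (hdec n)).trans (ih (Nat.lt_succ_iff.mp h'))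
        · have : m = n + 1 := le_antisymm h h'; subst this; exact subset_rfl
  have hx : ∀ x : V, ∃ m, x ∈ F → x ∉ C m := by
    intro x
    by_cases hxF : x ∈ F
    · have : x ∉ ⋂ n, C n := by rw [hempty]; exact fun h => h
      simp only [Set.mem_iInter, not_forall] at this
      obtain ⟨m, hm⟩ := this
      exact ⟨m, fun _ => hm⟩
    · exact ⟨0, fun h => absurd h hxF⟩
  choose μ hμ using hx
  refine ⟨hF.toFinset.sup μ, ?_⟩
  ext x
  simp only [Set.mem_inter_iff, Set.mem_empty_iff_false, iff_false, not_and]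
  intro hxC hxF
  have h1 : μ x ≤ hF.toFinset.sup μ := Finset.le_sup (hF.mem_toFinset.mpr hxF)
  exact hμ x hxF (hanti h1 hxC)

lemma sUnion_nil : ⋃₀ {R | R ∈ ([] : List (Set V))} = (∅ : Set V) := by
  simp

/-- An infinite set of naturals has elements above any bound (mathlib's `exists_gt`). -/
lemma region_nonempty {G : SimpleGraph V} {R : Set V} (h : (G.induce R).Connected) :
    R.Nonempty := by
  obtain ⟨⟨x, hx⟩⟩ := h.nonempty
  exact ⟨x, hx⟩

/-! ### Part 8: greedy selection of disjoint regions -/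

section Greedy

variable (G : SimpleGraph V) (v0 : V) (Cseq : ℕ → ℕ → Set V)

def badSet (L : List (Set V)) : Set V :=
  {v0} ∪ ⋃ R ∈ {R | R ∈ L}, (vBdry G R ∪ nbhd G R)

open Classical in
noncomputable def mfun (n : ℕ) (L : List (Set V)) : ℕ :=
  if h : ∃ m, Cseq n m ∩ badSet G v0 L = ∅ then Classical.choose h else 0

noncomputable def Qfun (n : ℕ) (L : List (Set V)) : Set V := Cseq n (mfun G v0 Cseq n L)

open Classical in
noncomputable def gstep (n : ℕ) (L : List (Set V)) : List (Set V) :=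
  if (∀ R ∈ L, Qfun G v0 Cseq n L ∩ R = ∅) then Qfun G v0 Cseq n L :: L else L

noncomputable def Lseq : ℕ → List (Set V)
  | 0 => []
  | n + 1 => gstep G v0 Cseq n (Lseq n)

lemma mem_gstep {n : ℕ} {L : List (Set V)} {R : Set V} (h : R ∈ L) :
    R ∈ gstep G v0 Cseq n L := by
  unfold gstep
  split
  · exact List.mem_cons_of_mem _ h
  · exact h

lemma Lseq_mono {R : Set V} {n m : ℕ} (h : n ≤ m) (hR : R ∈ Lseq G v0 Cseq n) :
    R ∈ Lseq G v0 Cseq m := by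
  induction m with
  | zero => have : n = 0 := Nat.le_zero.mp h; subst this; exact hR
  | succ m ih =>
      rcases Nat.lt_or_ge n (m + 1) with h' | h'
      · exact mem_gstep G v0 Cseq (ih (Nat.lt_succ_iff.mp h'))
      · have : n = m + 1 := le_antisymm h h'; subst this; exact hR

variable {G v0 Cseq}

lemma Qspec (hdec : ∀ n m, Cseq n (m + 1) ⊂ Cseq n m) (hempty : ∀ n, (⋂ m, Cseq n m) = ∅) (n : ℕ) (L : List (Set V)) (hfin : (badSet G v0 L).Finite) :
    Qfun G v0 Cseq n L ∩ badSet G v0 L = ∅ := by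
  have h : ∃ m, Cseq n m ∩ badSet G v0 L = ∅ := seq_avoid (hdec n) (hempty n) hfin
  rw [Qfun, mfun, dif_pos h]
  exact Classical.choose_spec h

variable {k : ℕ}

def GInv (G : SimpleGraph V) (v0 : V) (k : ℕ) (L : List (Set V)) : Prop :=
  (∀ R ∈ L, (vBdry G R).Finite ∧ minOutDegGE G R k ∧ v0 ∉ R ∧ (G.induce R).Connected) ∧
    ∀ R ∈ L, ∀ R' ∈ L, R ≠ R' → R ∩ R' = ∅

lemma badSet_finite (hG : LocFin G) {L : List (Set V)} (hInv : GInv G v0 k L) :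
    (badSet G v0 L).Finite := by
  refine (Set.finite_singleton v0).union ?_
  refine Set.Finite.biUnion (List.finite_toSet L) (fun R hR => ?_)
  exact ((hInv.1 R hR).1).union (nbhd_finite hG (hInv.1 R hR).1)

lemma gInv_gstep (hG : LocFin G)
    (hdec : ∀ n m, Cseq n (m + 1) ⊂ Cseq n m) (hempty : ∀ n, (⋂ m, Cseq n m) = ∅)
    (hreg : ∀ n m, IsRegion G (Cseq n m)) (hmin : ∀ n m, minOutDegGE G (Cseq n m) k) {n : ℕ} {L : List (Set V)} (hInv : GInv G v0 k L) :
    GInv G v0 k (gstep G v0 Cseq n L) := by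
  have hQd := Qspec hdec hempty n L (badSet_finite hG hInv)
  have hQprops : (vBdry G (Qfun G v0 Cseq n L)).Finite ∧
      minOutDegGE G (Qfun G v0 Cseq n L) k ∧ v0 ∉ Qfun G v0 Cseq n L ∧
      (G.induce (Qfun G v0 Cseq n L)).Connected := by
    refine ⟨(hreg n _).2, hmin n _, ?_, (hreg n _).1⟩
    intro hv0
    have : v0 ∈ Qfun G v0 Cseq n L ∩ badSet G v0 L := ⟨hv0, Or.inl rfl⟩
    rw [hQd] at this; exact this
  unfold gstep
  split
  · next hdisj =>
      constructor
      · intro R hR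
        rcases List.mem_cons.mp hR with h | h
        · subst h; exact hQprops
        · exact hInv.1 R h
      · intro R hR R' hR' hne
        rcases List.mem_cons.mp hR with h | h <;> rcases List.mem_cons.mp hR' with h' | h'
        · subst h; subst h'; exact absurd rfl hne
        · subst h; exact hdisj R' h'
        · subst h'; rw [Set.inter_comm]; exact hdisj R h
        · exact hInv.2 R h R' h' hne
  · exact hInv

lemma gInv_Lseq (hG : LocFin G)
    (hdec : ∀ n m, Cseq n (m + 1) ⊂ Cseq n m) (hempty : ∀ n, (⋂ m, Cseq n m) = ∅)
    (hreg : ∀ n m, IsRegion G (Cseq n m)) (hmin : ∀ n m, minOutDegGE G (Cseq n m) k) :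
    ∀ n, GInv G v0 k (Lseq G v0 Cseq n) := by
  intro n
  induction n with
  | zero => exact ⟨fun R hR => absurd hR (List.not_mem_nil), fun R hR => absurd hR (List.not_mem_nil)⟩
  | succ n ih => exact gInv_gstep hG hdec hempty hreg hmin ih

/-- coverage: at stage `n`, the region `Qfun n (Lseq n)` ends up inside a member of the list. -/
lemma gcover (hG : LocFin G)
    (hdec : ∀ n m, Cseq n (m + 1) ⊂ Cseq n m) (hempty : ∀ n, (⋂ m, Cseq n m) = ∅)
    (hreg : ∀ n m, IsRegion G (Cseq n m)) (hmin : ∀ n m, minOutDegGE G (Cseq n m) k) (n : ℕ) :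
    ∃ R ∈ Lseq G v0 Cseq (n + 1), Qfun G v0 Cseq n (Lseq G v0 Cseq n) ⊆ R := by
  have hInv := gInv_Lseq (v0 := v0) hG hdec hempty hreg hmin n
  have hQd := Qspec hdec hempty n _ (badSet_finite hG hInv)
  show ∃ R ∈ gstep G v0 Cseq n (Lseq G v0 Cseq n), _
  unfold gstep
  split
  · exact ⟨_, List.mem_cons_self, subset_rfl⟩
  · next hnot =>
      push_neg at hnot
      obtain ⟨R, hR, hne⟩ := hnot
      have hsub : Qfun G v0 Cseq n (Lseq G v0 Cseq n) ∩ (vBdry G R ∪ nbhd G R) = ∅ := by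
        rw [Set.eq_empty_iff_forall_notMem]
        rintro x ⟨hx1, hx2⟩
        have : x ∈ Qfun G v0 Cseq n (Lseq G v0 Cseq n) ∩ badSet G v0 (Lseq G v0 Cseq n) :=
          ⟨hx1, Or.inr (Set.mem_biUnion hR hx2)⟩
        rw [hQd] at this; exact this
      rcases connected_subset_or_disjoint (hreg n _).1 hsub with h | h
      · exact ⟨R, hR, h⟩
      · exact absurd h (Set.nonempty_iff_ne_empty.mp hne)

end Greedy

/-! ### Part 9: separators and good components -/

section GoodComponents

variable (G : SimpleGraph V) (v0 : V) (Cseq : ℕ → ℕ → Set V)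

/-- The `n`-th separator: a ball together with the boundaries of selected regions. -/
def SnF (n : ℕ) : Set V :=
  _root_.ball G v0 n ∪ ⋃ R ∈ {R | R ∈ Lseq G v0 Cseq n}, vBdry G R

/-- A good component at stage `n`. -/
def GoodD (n : ℕ) (D : Set V) : Prop :=
  (∃ u, u ∉ SnF G v0 Cseq n ∧ u ∈ comp G ∅ v0 ∧ D = comp G (SnF G v0 Cseq n) u) ∧
    D.Infinite ∧ ∀ R ∈ Lseq G v0 Cseq n, D ∩ R = ∅

variable {G v0 Cseq}

lemma v0_mem_SnF (n : ℕ) : v0 ∈ SnF G v0 Cseq n := Or.inl (mem_ball_self G v0 n)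

lemma SnF_mono {n m : ℕ} (h : n ≤ m) : SnF G v0 Cseq n ⊆ SnF G v0 Cseq m := by
  rintro x (hx | hx)
  · exact Or.inl (ball_mono G v0 h hx)
  · simp only [Set.mem_iUnion] at hx
    obtain ⟨R, hR, hxR⟩ := hx
    exact Or.inr (Set.mem_biUnion (Lseq_mono G v0 Cseq h hR) hxR)

lemma vBdry_subset_SnF {n : ℕ} {R : Set V} (hR : R ∈ Lseq G v0 Cseq n) :
    vBdry G R ⊆ SnF G v0 Cseq n := fun x hx => Or.inr (Set.mem_biUnion hR hx)

variable {k : ℕ}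

lemma SnF_finite (hG : LocFin G) (hInv : GInv G v0 k (Lseq G v0 Cseq n)) :
    (SnF G v0 Cseq n).Finite := by
  refine (ball_finite hG n v0).union ?_
  exact Set.Finite.biUnion (List.finite_toSet _) (fun R hR => (hInv.1 R hR).1)

lemma good_pt {n : ℕ} {D : Set V} (hD : GoodD G v0 Cseq n D) {x : V} (hx : x ∈ D) :
    D = comp G (SnF G v0 Cseq n) x := by
  obtain ⟨⟨u, hu1, hu2, hu3⟩, _, _⟩ := hD
  exact comp_eq_comp_of_mem hu3 hx

lemma good_disj_SnF {n : ℕ} {D : Set V} (hD : GoodD G v0 Cseq n D) :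
    D ∩ SnF G v0 Cseq n = ∅ := by
  obtain ⟨⟨u, hu1, hu2, hu3⟩, _, _⟩ := hD
  rw [hu3]; exact comp_inter_S hu1

lemma good_sub_K {n : ℕ} {D : Set V} (hD : GoodD G v0 Cseq n D) : D ⊆ comp G ∅ v0 := by
  obtain ⟨⟨u, hu1, hu2, hu3⟩, _, _⟩ := hD
  rw [hu3, ← comp_eq_of_mem hu2]
  exact comp_mono (Set.empty_subset _) u

lemma good_nested {n m : ℕ} (h : n ≤ m) {D D' : Set V} (hD : GoodD G v0 Cseq n D)
    (hD' : GoodD G v0 Cseq m D') (hint : (D' ∩ D).Nonempty) : D' ⊆ D := by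
  obtain ⟨x, hx', hx⟩ := hint
  rw [good_pt hD' hx', good_pt hD hx]
  exact comp_mono (SnF_mono h) x

lemma good_family_finite (hG : LocFin G) (hInv : GInv G v0 k (Lseq G v0 Cseq n)) :
    {D | GoodD G v0 Cseq n D}.Finite := by
  have hSfin : (SnF G v0 Cseq n).Finite := SnF_finite hG hInv
  refine Set.Finite.subset ((nbrs_finite hG hSfin).image (comp G (SnF G v0 Cseq n))) ?_
  rintro D ⟨⟨u, hu1, hu2, hu3⟩, _, _⟩
  have hreach : G.Reachable u v0 := ((hu2 : (Del G ∅).Reachable v0 u).mono (Del_le G ∅)).symm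
  obtain ⟨p⟩ := hreach
  obtain ⟨u', hu', s, hs, hadj⟩ := comp_touches p hu1 (v0_mem_SnF n)
  refine ⟨u', ⟨s, hs, hadj.symm⟩, ?_⟩
  rw [hu3]
  exact comp_eq_of_mem hu' 

/-- Projection of a good component to an earlier stage. -/
lemma good_proj {n m : ℕ} (h : n ≤ m) {D' : Set V} (hD' : GoodD G v0 Cseq m D') :
    ∃ D, GoodD G v0 Cseq n D ∧ D' ⊆ D := by
  obtain ⟨⟨u, hu1, hu2, hu3⟩, hinf, hdisj⟩ := hD'
  have hu1' : u ∉ SnF G v0 Cseq n := fun hx => hu1 (SnF_mono h hx)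
  set D : Set V := comp G (SnF G v0 Cseq n) u with hD
  have hsub : D' ⊆ D := by rw [hu3, hD]; exact comp_mono (SnF_mono h) u
  refine ⟨D, ⟨⟨u, hu1', hu2, rfl⟩, hinf.mono hsub, ?_⟩, hsub⟩
  intro R hR
  by_contra hne
  have hne' : (D ∩ R).Nonempty := Set.nonempty_iff_ne_empty.mpr hne
  have hDR : D ⊆ R :=
    comp_subset_of_inter_region (vBdry_subset_SnF hR) hu1' hne'
  have : (D' ∩ R).Nonempty := by
    obtain ⟨x, hx⟩ := hinf.nonempty
    exact ⟨x, hx, hDR (hsub hx)⟩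
  rw [hdisj R (Lseq_mono G v0 Cseq h hR)] at this
  exact Set.not_nonempty_empty this

/-- A good component is extendible if it contains good components at all later stages. -/
def ExtD (G : SimpleGraph V) (v0 : V) (Cseq : ℕ → ℕ → Set V) (n : ℕ) (D : Set V) : Prop :=
  GoodD G v0 Cseq n D ∧ ∀ m, n ≤ m → ∃ D', GoodD G v0 Cseq m D' ∧ D' ⊆ D

/-- The core König-style selection of an extendible good component. -/
lemma ext_find (hG : LocFin G)
    (hInvAll : ∀ n, GInv G v0 k (Lseq G v0 Cseq n)) {n₀ : ℕ} (C : Set V → Prop)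
    (hsel : ∀ m, n₀ ≤ m → ∃ D', GoodD G v0 Cseq m D' ∧ C D')
    (hC : ∀ {ℓ : ℕ} {E D' : Set V}, n₀ ≤ ℓ → GoodD G v0 Cseq ℓ E → C D' → D'.Nonempty →
      D' ⊆ E → C E) :
    ∃ D, ExtD G v0 Cseq n₀ D ∧ C D := by
  classical
  choose Dg hDg hDC using hsel
  have hE : ∀ m (h : n₀ ≤ m), ∃ D, GoodD G v0 Cseq n₀ D ∧ Dg m h ⊆ D :=
    fun m h => good_proj h (hDg m h)
  set E : ℕ → Set V := fun m => if h : n₀ ≤ m then Classical.choose (hE m h) else ∅ with hEdef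
  have hEgood : ∀ m (h : n₀ ≤ m), GoodD G v0 Cseq n₀ (E m) ∧ Dg m h ⊆ E m := by
    intro m h
    simp only [hEdef, dif_pos h]
    exact Classical.choose_spec (hE m h)
  obtain ⟨Dstar, hDstarF, hI⟩ := pigeon (good_family_finite hG (hInvAll n₀))
    (E := E) (n₀ := n₀) (fun m hm => (hEgood m hm).1)
  have hDstar : GoodD G v0 Cseq n₀ Dstar := hDstarF
  have hCstar : C Dstar := by
    obtain ⟨m, hm, hEm⟩ := hI.nonempty
    refine hC (le_refl n₀) hDstar (hDC m hm) ?_ (hEm ▸ (hEgood m hm).2)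
    exact ((hDg m hm).2.1).nonempty
  refine ⟨Dstar, ⟨hDstar, ?_⟩, hCstar⟩
  intro m hm
  obtain ⟨m', hm'I, hmm'⟩ := infinite_exists_ge hI m
  obtain ⟨hn₀m', hEm'⟩ := hm'I
  obtain ⟨D₂, hD₂, hsub₂⟩ := good_proj hmm' (hDg m' hn₀m')
  refine ⟨D₂, hD₂, good_nested hm hDstar hD₂ ?_⟩
  obtain ⟨x, hx⟩ := ((hDg m' hn₀m').2.1).nonempty
  exact ⟨x, hsub₂ hx, hEm' ▸ (hEgood m' hn₀m').2 hx⟩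

end GoodComponents

/-! ### Part 10: the limit ray -/

lemma walk_ray {G : SimpleGraph V} (hG : LocFin G) (S : ℕ → Set V) (D : ℕ → Set V)
    (hmono : ∀ n, D (n + 1) ⊆ D n)
    (hinf : ∀ n, (D n).Infinite)
    (hcomp : ∀ n, ∀ x ∈ D n, D n = comp G (S n) x)
    (hesc : ∀ v ∈ D 0, ∃ n, v ∈ S n)
    (hdisj : ∀ n, D n ∩ S n = ∅) :
    ∃ f, IsRay G f ∧ ∀ n, HasTailIn f (D n) := by
  classical
  have hmono' : ∀ {n m : ℕ}, n ≤ m → D m ⊆ D n := by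
    intro n m h
    induction m with
    | zero => have : n = 0 := Nat.le_zero.mp h; subst this; exact subset_rfl
    | succ m ih =>
        rcases Nat.lt_or_ge n (m + 1) with h' | h'
        · exact (hmono m).trans (ih (Nat.lt_succ_iff.mp h'))
        · have : n = m + 1 := le_antisymm h h'; subst this; exact subset_rfl
  -- the sequence of anchor points
  set step : ∀ n : ℕ, {x // x ∈ D n} → {x // x ∈ D (n + 1)} := fun n s =>
    ⟨Classical.choose (((hinf (n + 1)).diff (Set.finite_singleton s.1)).nonempty),
      (Classical.choose_spec (((hinf (n + 1)).diff (Set.finite_singleton s.1)).nonempty)).1⟩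
    with hstep
  set xsS : ∀ n : ℕ, {x // x ∈ D n} :=
    fun n => Nat.rec ⟨Classical.choose (hinf 0).nonempty,
      Classical.choose_spec (hinf 0).nonempty⟩ step n with hxsS
  set xs : ℕ → V := fun n => (xsS n).1 with hxs
  have hxsmem : ∀ n, xs n ∈ D n := fun n => (xsS n).2
  have hxs_ne : ∀ n, xs (n + 1) ≠ xs n := by
    intro n
    have heq : xsS (n + 1) = step n (xsS n) := rfl
    have := (Classical.choose_spec
      (((hinf (n + 1)).diff (Set.finite_singleton (xsS n).1)).nonempty)).2
    simp only [Set.mem_singleton_iff] at this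
    intro hcon
    exact this hcon
  -- the segment walks
  have hreachseg : ∀ n, (Del G (S n)).Reachable (xs n) (xs (n + 1)) := by
    intro n
    have h1 : xs (n + 1) ∈ D n := hmono n (hxsmem (n + 1))
    have h2 : D n = comp G (S n) (xs n) := hcomp n (xs n) (hxsmem n)
    rw [h2] at h1
    exact h1
  set pw : ∀ n : ℕ, (Del G (S n)).Walk (xs n) (xs (n + 1)) := fun n => (hreachseg n).some
    with hpw
  set len : ℕ → ℕ := fun n => (pw n).length with hlen
  have hlen1 : ∀ n, 1 ≤ len n := by
    intro n
    by_contra hcon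
    push_neg at hcon
    have h0 : len n = 0 := by omega
    have h0' : (pw n).length = 0 := h0
    exact hxs_ne n (Walk.eq_of_length_eq_zero h0').symm
  set o : ℕ → ℕ := fun n => Nat.rec 0 (fun m ih => ih + len m) n with ho
  have ho_succ : ∀ n, o (n + 1) = o n + len n := fun n => rfl
  have ho_le : ∀ n, n ≤ o n := by
    intro n
    induction n with
    | zero => exact le_refl 0
    | succ n ih => rw [ho_succ]; have := hlen1 n; omega
  have ho_mono : ∀ {a b : ℕ}, a ≤ b → o a ≤ o b := by
    intro a b h
    induction b with
    | zero => have : a = 0 := Nat.le_zero.mp h; subst this; exact le_refl _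
    | succ b ih =>
        rcases Nat.lt_or_ge a (b + 1) with h' | h'
        · rw [ho_succ]; have := ih (Nat.lt_succ_iff.mp h'); omega
        · have : a = b + 1 := le_antisymm h h'; subst this; exact le_refl _
  set idx : ℕ → ℕ := fun t => Nat.findGreatest (fun n => o n ≤ t) t with hidx
  have hidx1 : ∀ t, o (idx t) ≤ t := by
    intro t
    exact Nat.findGreatest_spec (P := fun n => o n ≤ t) (Nat.zero_le t) (Nat.zero_le t)
  have hidx2 : ∀ t, t < o (idx t + 1) := by
    intro t
    by_contra hcon
    push_neg at hcon
    have h1 : idx t + 1 ≤ t := le_trans (ho_le _) hcon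
    have h2 : idx t + 1 ≤ idx t := Nat.le_findGreatest (P := fun n => o n ≤ t) h1 hcon
    omega
  have hidx_eq : ∀ t n, o n ≤ t → t < o (n + 1) → idx t = n := by
    intro t n h1 h2
    rcases lt_trichotomy (idx t) n with h | h | h
    · have : o (idx t + 1) ≤ o n := ho_mono h
      have := hidx2 t; omega
    · exact h
    · have : o (n + 1) ≤ o (idx t) := ho_mono h
      have := hidx1 t; omega
  set w : ℕ → V := fun t => (pw (idx t)).getVert (t - o (idx t)) with hw
  have hw_eq : ∀ t n, idx t = n → w t = (pw n).getVert (t - o n) := by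
    intro t n h
    subst h
    rfl
  have hw_o : ∀ n, w (o n) = xs n := by
    intro n
    have h := hidx_eq (o n) n (le_refl _) (by rw [ho_succ]; have := hlen1 n; omega)
    rw [hw_eq (o n) n h, Nat.sub_self]
    exact Walk.getVert_zero _
  -- adjacency along the concatenated walk
  have hadjw : ∀ t, G.Adj (w t) (w (t + 1)) := by
    intro t
    set n := idx t with hn
    have h1 : o n ≤ t := hidx1 t
    have h2 : t < o (n + 1) := hidx2 t
    have hilen : t - o n < len n := by rw [ho_succ] at h2; omega
    rcases Nat.lt_or_ge (t + 1) (o (n + 1)) with hc | hc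
    · have hidx' : idx (t + 1) = n := hidx_eq (t + 1) n (by omega) hc
      rw [hw_eq (t + 1) n hidx', hw_eq t n hn.symm]
      have harith : t + 1 - o n = (t - o n) + 1 := by omega
      rw [harith]
      exact Del_le G (S n) ((pw n).adj_getVert_succ hilen)
    · have hc' : t + 1 = o (n + 1) := by omega
      have hxval : w (t + 1) = xs (n + 1) := by rw [hc']; exact hw_o (n + 1)
      have harith : t - o n = len n - 1 := by rw [ho_succ] at hc'; omega
      have hadj := (pw n).adj_getVert_succ (i := len n - 1)
        (by show len n - 1 < len n; have := hlen1 n; omega)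
      have hend : (pw n).getVert (len n - 1 + 1) = xs (n + 1) := by
        have heq1 : len n - 1 + 1 = len n := by have := hlen1 n; omega
        rw [heq1]
        show (pw n).getVert ((pw n).length) = xs (n + 1)
        exact Walk.getVert_length _
      rw [hxval, hw_eq t n hn.symm, harith]
      rw [hend] at hadj
      exact Del_le G (S n) hadj
  -- the walk stays in the decreasing components
  have hwD : ∀ t, w t ∈ D (idx t) := by
    intro t
    have hre : (Del G (S (idx t))).Reachable (xs (idx t)) (w t) := reachable_getVert _ _
    have h2 : D (idx t) = comp G (S (idx t)) (xs (idx t)) := hcomp _ _ (hxsmem _)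
    rw [h2]
    exact hre
  have htail : ∀ n t, o n ≤ t → w t ∈ D n := by
    intro n t h
    have h1 : n ≤ idx t := Nat.le_findGreatest (le_trans (ho_le n) h) h
    exact hmono' h1 (hwD t)
  -- escape from every vertex
  have hescw : ∀ v : V, ∃ T, ∀ t, T ≤ t → w t ≠ v := by
    intro v
    by_cases hv : v ∈ D 0
    · obtain ⟨n, hn⟩ := hesc v hv
      refine ⟨o n, fun t ht hcon => ?_⟩
      have : w t ∈ D n := htail n t ht
      rw [hcon] at this
      have : v ∈ D n ∩ S n := ⟨this, hn⟩
      rw [hdisj n] at this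
      exact this
    · refine ⟨0, fun t _ hcon => ?_⟩
      have : w t ∈ D 0 := hmono' (Nat.zero_le _) (hwD t)
      rw [hcon] at this
      exact hv this
  -- last-visit function
  set Nv : V → ℕ := fun v => Classical.choose (hescw v) with hNv
  have hNv_spec : ∀ v t, Nv v ≤ t → w t ≠ v := fun v => Classical.choose_spec (hescw v)
  set LV : V → ℕ := fun v => Nat.findGreatest (fun t => w t = v) (Nv v) with hLV
  have hA : ∀ v s, w s = v → s ≤ LV v := by
    intro v s hs
    have hsN : s ≤ Nv v := by
      by_contra hcon
      push_neg at hcon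
      exact hNv_spec v s (le_of_lt hcon) hs
    exact Nat.le_findGreatest (P := fun t => w t = v) hsN hs
  have hB : ∀ v s, w s = v → w (LV v) = v := by
    intro v s hs
    have hsN : s ≤ Nv v := by
      by_contra hcon
      push_neg at hcon
      exact hNv_spec v s (le_of_lt hcon) hs
    exact Nat.findGreatest_spec (P := fun t => w t = v) hsN hs
  -- the extracted ray times
  set τ : ℕ → ℕ := fun n => Nat.rec (LV (w 0)) (fun _ ih => LV (w (ih + 1))) n with hτ
  have hτ_succ : ∀ n, τ (n + 1) = LV (w (τ n + 1)) := fun n => rfl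
  have hτ0 : w (τ 0) = w 0 := hB (w 0) 0 rfl
  have hτs : ∀ n, w (τ (n + 1)) = w (τ n + 1) := by
    intro n
    rw [hτ_succ]
    exact hB (w (τ n + 1)) (τ n + 1) rfl
  have hτ_lt : ∀ n, τ n + 1 ≤ τ (n + 1) := by
    intro n
    rw [hτ_succ]
    exact hA (w (τ n + 1)) (τ n + 1) rfl
  have hτ_mono : ∀ {a b : ℕ}, a < b → τ a < τ b := by
    intro a b h
    induction b with
    | zero => omega
    | succ b ih =>
        rcases Nat.lt_or_ge a b with h' | h'
        · have := ih h'; have := hτ_lt b; omega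
        · have : a = b := by omega
          subst this; have := hτ_lt a; omega
  have hτ_ge : ∀ n, n ≤ τ n := by
    intro n
    induction n with
    | zero => exact Nat.zero_le _
    | succ n ih => have := hτ_lt n; omega
  have hLVfix : ∀ n, LV (w (τ n)) = τ n := by
    intro n
    cases n with
    | zero => rw [hτ0]; rfl
    | succ n => rw [hτs n]
  refine ⟨fun n => w (τ n), ⟨?_, ?_⟩, ?_⟩
  · -- injective
    intro a b hab
    have hab' : w (τ a) = w (τ b) := hab
    rcases lt_trichotomy a b with h | h | h
    · exfalso
      have h2 : τ b ≤ LV (w (τ a)) := hA _ (τ b) hab'.symm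
      rw [hLVfix a] at h2
      have := hτ_mono h
      omega
    · exact h
    · exfalso
      have h2 : τ a ≤ LV (w (τ b)) := hA _ (τ a) hab'
      rw [hLVfix b] at h2
      have := hτ_mono h
      omega
  · -- adjacency
    intro n
    show G.Adj (w (τ n)) (w (τ (n + 1)))
    rw [hτs n]
    exact hadjw (τ n)
  · -- tails
    intro n
    refine ⟨o n, fun m hm => ?_⟩
    show w (τ m) ∈ D n
    exact htail n (τ m) (le_trans hm (hτ_ge m))

/-! ### Part 11: the nested branch -/

lemma branch_exists {G : SimpleGraph V} {v0 : V} {Cseq : ℕ → ℕ → Set V} {k : ℕ}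
    (hG : LocFin G) (hInvAll : ∀ n, GInv G v0 k (Lseq G v0 Cseq n))
    (hgood : ∀ n, ∃ D, GoodD G v0 Cseq n D) :
    ∃ Db : ℕ → Set V, (∀ n, GoodD G v0 Cseq n (Db n)) ∧ ∀ n, Db (n + 1) ⊆ Db n := by
  classical
  have hK1 : ∃ D, ExtD G v0 Cseq 0 D := by
    obtain ⟨D, hD, _⟩ := ext_find (k := k) hG hInvAll (n₀ := 0) (fun _ => True)
      (fun m _ => (hgood m).imp (fun D hD => ⟨hD, trivial⟩))
      (fun _ _ _ _ _ => trivial)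
    exact ⟨D, hD⟩
  have hK2 : ∀ n (D : Set V), ExtD G v0 Cseq n D → ∃ D', ExtD G v0 Cseq (n + 1) D' ∧ D' ⊆ D := by
    intro n D hD
    obtain ⟨D', hD', hsub⟩ := ext_find (k := k) hG hInvAll (n₀ := n + 1) (fun D' => D' ⊆ D)
      (fun m hm => hD.2 m (le_trans (Nat.le_succ n) hm))
      (by
        intro ℓ E D'' hℓ hE hD'' hne hsubE
        refine good_nested (le_trans (Nat.le_succ n) hℓ) hD.1 hE ?_
        obtain ⟨x, hx⟩ := hne
        exact ⟨x, hsubE hx, hD'' hx⟩)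
    exact ⟨D', hD', hsub⟩
  set seq : ∀ n : ℕ, {D // ExtD G v0 Cseq n D} :=
    fun n => Nat.rec ⟨Classical.choose hK1, Classical.choose_spec hK1⟩
      (fun n ih => ⟨Classical.choose (hK2 n ih.1 ih.2),
        (Classical.choose_spec (hK2 n ih.1 ih.2)).1⟩) n with hseq
  refine ⟨fun n => (seq n).1, fun n => (seq n).2.1, fun n => ?_⟩
  exact (Classical.choose_spec (hK2 n (seq n).1 (seq n).2)).2

/-- Theorem 2(i): if `G` is locally finite, infinite, has at most countably many ends,
`δ(G) ≥ k`, and every end has a defining sequence `C₀ ⊋ C₁ ⊋ …` of regions with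
`δ⁺_G(Cₙ) ≥ k` and `G - Cₙ` connected, then `G` has a finite nonempty subgraph of
minimum degree at least `k`. -/
theorem stmt12 (G : SimpleGraph V) (hG : LocFin G) (hinf : Infinite V) (k : ℕ)
    (hcount : Countable (Quot fun p q : {f : ℕ → V // IsRay G f} => RayEquiv G p.1 q.1))
    (hdeg : ∀ v, k ≤ (G.neighborSet v).ncard)
    (hends : ∀ f, IsRay G f → ∃ C : ℕ → Set V,
      (∀ n, IsRegion G (C n)) ∧ (∀ n, C (n + 1) ⊂ C n) ∧ (⋂ n, C n) = ∅ ∧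
      (∀ n, ∃ g, IsRay G g ∧ RayEquiv G f g ∧ Set.range g ⊆ C n) ∧
      (∀ n, minOutDegGE G (C n) k) ∧
      (∀ n, (G.induce ((C n)ᶜ : Set V)).Connected)) :
    ∃ H : G.Subgraph, H.verts.Finite ∧ H.verts.Nonempty ∧
      ∀ w ∈ H.verts, k ≤ (H.neighborSet w).ncard := by
  classical
  by_cases hfincomp : ∃ v, (comp G ∅ v).Finite
  · -- a finite component exists: it is itself the desired subgraph
    obtain ⟨v, hv⟩ := hfincomp
    have hclosed : ∀ a ∈ comp G ∅ v, ∀ w, G.Adj a w → w ∈ comp G ∅ v :=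
      fun a ha w hadj => comp_closed (Set.notMem_empty v) a ha w (Set.notMem_empty w) hadj
    refine construction hG hdeg (comp G ∅ v) hclosed []
      (fun R hR => absurd hR (List.not_mem_nil))
      (fun R hR => absurd hR (List.not_mem_nil))
      (fun R hR => absurd hR (List.not_mem_nil))
      (fun R hR => absurd hR (List.not_mem_nil))
      (by simpa using hv) ⟨v, by simpa using mem_comp_self G ∅ v⟩
  · -- all components are infinite
    push_neg at hfincomp
    have hne : Nonempty V := inferInstance
    set v0 : V := Classical.arbitrary V with hv0
    set K : Set V := comp G ∅ v0 with hK
    have hKinf : K.Infinite := hfincomp v0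
    have hKclosed : ∀ a ∈ K, ∀ w, G.Adj a w → w ∈ K :=
      fun a ha w hadj => comp_closed (Set.notMem_empty v0) a ha w (Set.notMem_empty w) hadj
    -- a ray exists
    obtain ⟨r0, hr0, hr00, hr0K⟩ := konig_ray hG (Set.notMem_empty v0) hKinf
    -- enumerate the ends
    have hQne : Nonempty (Quot fun p q : {f : ℕ → V // IsRay G f} => RayEquiv G p.1 q.1) :=
      ⟨Quot.mk _ ⟨r0, hr0⟩⟩
    obtain ⟨e, he⟩ := exists_surjective_nat
      (Quot fun p q : {f : ℕ → V // IsRay G f} => RayEquiv G p.1 q.1)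
    set σ : ℕ → {f : ℕ → V // IsRay G f} :=
      fun n => Classical.choose (Quot.exists_rep (e n)) with hσdef
    have hσ : ∀ (f : ℕ → V), IsRay G f → ∃ n, RayEquiv G (σ n).1 f := by
      intro f hf
      obtain ⟨n, hn⟩ := he (Quot.mk _ ⟨f, hf⟩)
      have h1 : Quot.mk _ (σ n) = e n := Classical.choose_spec (Quot.exists_rep (e n))
      have h2 : Quot.mk (fun p q : {f : ℕ → V // IsRay G f} => RayEquiv G p.1 q.1) (σ n)
          = Quot.mk _ ⟨f, hf⟩ := h1.trans hn
      have h3 := Quot.eq.mp h2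
      exact ⟨n, (Equivalence.eqvGen_iff (rayEquiv_equivalence G)).mp h3⟩
    -- defining sequences for each enumerated end
    have hends' : ∀ n : ℕ, ∃ C : ℕ → Set V,
        (∀ m, IsRegion G (C m)) ∧ (∀ m, C (m + 1) ⊂ C m) ∧ (⋂ m, C m) = ∅ ∧
        (∀ m, ∃ g, IsRay G g ∧ RayEquiv G (σ n).1 g ∧ Set.range g ⊆ C m) ∧
        (∀ m, minOutDegGE G (C m) k) ∧
        (∀ m, (G.induce ((C m)ᶜ : Set V)).Connected) :=
      fun n => hends (σ n).1 (σ n).2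
    choose Cseq hreg hdec hempty hray hmin' hconn using hends'
    have hInvAll : ∀ n, GInv G v0 k (Lseq G v0 Cseq n) :=
      gInv_Lseq (v0 := v0) hG hdec hempty hreg hmin'
    by_cases hgood : ∀ n, ∃ D, GoodD G v0 Cseq n D
    · -- Case 2: a nested branch of good components exists, leading to a contradiction
      exfalso
      obtain ⟨Db, hDbGood, hDbNest⟩ := branch_exists hG hInvAll hgood
      obtain ⟨f, hf, htails⟩ := walk_ray hG (fun n => SnF G v0 Cseq n) Db hDbNest
        (fun n => (hDbGood n).2.1)
        (fun n x hx => good_pt (hDbGood n) hx)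
        (by
          intro v hv
          have hvK : v ∈ K := good_sub_K (hDbGood 0) hv
          have hreach : G.Reachable v0 v := (hvK : (Del G ∅).Reachable v0 v).mono (Del_le G ∅)
          obtain ⟨m, hm⟩ := reachable_mem_ball hreach
          exact ⟨m, Or.inl hm⟩)
        (fun n => good_disj_SnF (hDbGood n))
      obtain ⟨j, hj⟩ := hσ f hf
      obtain ⟨R, hRmem, hQR⟩ := gcover (v0 := v0) hG hdec hempty hreg hmin' j
      obtain ⟨g, hgray, hgeq, hgrange⟩ := hray j (mfun G v0 Cseq j (Lseq G v0 Cseq j))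
      have hfg : RayEquiv G f g := rayEquiv_trans (rayEquiv_symm hj) hgeq
      set n := j + 1 with hn
      set Q : Set V := Qfun G v0 Cseq j (Lseq G v0 Cseq j) with hQdef
      set T : Set V := SnF G v0 Cseq n ∪ vBdry G Q with hT
      have hTfin : T.Finite := (SnF_finite hG (hInvAll n)).union (hreg j _).2
      obtain ⟨E, hE, htailf, htailg⟩ := hfg T hTfin
      -- E is inside Q
      have hEQ : E ⊆ Q := by
        refine isCompOf_subset_of_inter_region hE (fun x hx => Or.inr hx) ?_
        obtain ⟨N, hN⟩ := htailg
        exact ⟨g N, hN N (le_refl N), hgrange (Set.mem_range_self N)⟩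
      -- E is inside Db n
      obtain ⟨N1, hN1⟩ := htailf
      obtain ⟨N2, hN2⟩ := htails n
      set x : V := f (max N1 N2) with hx
      have hxE : x ∈ E := hN1 _ (le_max_left _ _)
      have hxD : x ∈ Db n := hN2 _ (le_max_right _ _)
      have hED : E ⊆ Db n := by
        have h1 : E = comp G T x := isCompOf_eq_comp hE hxE
        have h2 : Db n = comp G (SnF G v0 Cseq n) x := good_pt (hDbGood n) hxD
        rw [h1, h2]
        exact comp_mono (Set.subset_union_left) x
      -- contradiction with disjointness
      have hdisjRD : Db n ∩ R = ∅ := (hDbGood n).2.2 R hRmem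
      have : x ∈ Db n ∩ R := ⟨hxD, hQR (hEQ hxE)⟩
      rw [hdisjRD] at this
      exact this
    · -- Case 1: at some stage there is no good component; we obtain a finite cover
      push_neg at hgood
      obtain ⟨n, hno⟩ := hgood
      set L : List (Set V) := Lseq G v0 Cseq n with hL
      set L' : List (Set V) := L.filter (fun R => decide (R ∩ K).Nonempty) with hL'
      have hmemL' : ∀ R, R ∈ L' ↔ R ∈ L ∧ (R ∩ K).Nonempty := by
        intro R
        rw [hL', List.mem_filter]
        simp only [decide_eq_true_eq]
      have hInv := hInvAll n
      -- the union over L' and over L agree within K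
      have hUeq : K \ ⋃₀ {R | R ∈ L'} = K \ ⋃₀ {R | R ∈ L} := by
        ext x
        simp only [Set.mem_diff, Set.mem_sUnion, Set.mem_setOf_eq]
        constructor
        · rintro ⟨hxK, hx⟩
          refine ⟨hxK, fun ⟨R, hRL, hxR⟩ => hx ⟨R, (hmemL' R).mpr ⟨hRL, ⟨x, hxR, hxK⟩⟩, hxR⟩⟩
        · rintro ⟨hxK, hx⟩
          exact ⟨hxK, fun ⟨R, hRL', hxR⟩ => hx ⟨R, ((hmemL' R).mp hRL').1, hxR⟩⟩
      -- finiteness of the uncovered part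
      have hSn : (SnF G v0 Cseq n).Finite := SnF_finite hG hInv
      set NS : Set V := {w | ∃ s ∈ SnF G v0 Cseq n, G.Adj s w} with hNS
      have hNSfin : NS.Finite := nbrs_finite hG hSn
      set F : Set V := ⋃ u ∈ NS,
        (if (comp G (SnF G v0 Cseq n) u).Finite then comp G (SnF G v0 Cseq n) u else ∅)
        with hF
      have hFfin : F.Finite := by
        refine Set.Finite.biUnion hNSfin (fun u _ => ?_)
        split
        · assumption
        · exact Set.finite_empty
      have hcover : K \ ⋃₀ {R | R ∈ L} ⊆ SnF G v0 Cseq n ∪ F := by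
        rintro y ⟨hyK, hyU⟩
        by_cases hySn : y ∈ SnF G v0 Cseq n
        · exact Or.inl hySn
        · right
          set D : Set V := comp G (SnF G v0 Cseq n) y with hD
          have hDdisj : ∀ R ∈ L, D ∩ R = ∅ := by
            intro R hR
            by_contra hcontra
            have hne' : (D ∩ R).Nonempty := Set.nonempty_iff_ne_empty.mpr hcontra
            have hDR : D ⊆ R :=
              comp_subset_of_inter_region (vBdry_subset_SnF hR) hySn hne'
            exact hyU ⟨R, hR, hDR (mem_comp_self G _ y)⟩
          have hDfin : D.Finite := by
            by_contra hDinf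
            exact hno D ⟨⟨y, hySn, hyK, rfl⟩, hDinf, hDdisj⟩
          -- find an attachment point
          have hreach : G.Reachable y v0 := ((hyK : (Del G ∅).Reachable v0 y).mono
            (Del_le G ∅)).symm
          obtain ⟨p⟩ := hreach
          obtain ⟨u, hu, s, hs, hadj⟩ := comp_touches p hySn (v0_mem_SnF n)
          have huNS : u ∈ NS := ⟨s, hs, hadj.symm⟩
          have hDu : comp G (SnF G v0 Cseq n) u = D := comp_eq_of_mem hu
          refine Set.mem_biUnion huNS ?_
          rw [hDu, if_pos hDfin]
          exact mem_comp_self G _ y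
      refine construction hG hdeg K hKclosed L' ?_ ?_ ?_ ?_ ?_ ?_
      · -- hsub
        intro R hR
        obtain ⟨hRL, hRK⟩ := (hmemL' R).mp hR
        exact connected_subset_closed (hInv.1 R hRL).2.2.2 hKclosed hRK
      · exact fun R hR => (hInv.1 R ((hmemL' R).mp hR).1).1
      · exact fun R hR => (hInv.1 R ((hmemL' R).mp hR).1).2.1
      · exact fun R hR R' hR' hne' =>
          hInv.2 R ((hmemL' R).mp hR).1 R' ((hmemL' R').mp hR').1 hne'
      · rw [hUeq]
        exact (hSn.union hFfin).subset hcover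
      · rw [hUeq]
        refine ⟨v0, mem_comp_self G ∅ v0, fun hcon => ?_⟩
        obtain ⟨R, hRL, hv0R⟩ := hcon
        exact (hInv.1 R hRL).2.2.1 hv0R
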